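/- Every compressed lattice polytope is normal: if ∇ ⊆ ℝ^d is a lattice polytope all of whose facet widths equal 1, then for every k ≥ 1 every lattice point of k∇ is a sum of k lattice points of ∇. -/

import Mathlib

open BigOperators Pointwise

/-- Key lemma: a face of a lattice polytope (cut out by equalities among the defining
inequalities) contains a lattice point. -/
lemma compressed_key
    (d : ℕ) (F : Type) [Fintype F]
    (a : F → Fin d → ℤ) (c : F → ℤ)
    (P : Set (Fin d → ℝ)) (V : Finset (Fin d → ℤ))
    (hlat : P = convexHull ℝ ((fun m : Fin d → ℤ => fun i => (m i : ℝ)) ''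
      (V : Set (Fin d → ℤ))))
    (hfacet : P = {x : Fin d → ℝ | ∀ f : F, (c f : ℝ) ≤ ∑ i, x i * (a f i : ℝ)})
    (S : Set F) (p : Fin d → ℝ) (hp : p ∈ P)
    (hpS : ∀ f ∈ S, ∑ i, p i * (a f i : ℝ) = (c f : ℝ)) :
    ∃ m : Fin d → ℤ, (fun i => (m i : ℝ)) ∈ P ∧
      ∀ f ∈ S, ∑ i, (m i : ℝ) * (a f i : ℝ) = (c f : ℝ) := by
  classical
  set Q : Set (Fin d → ℝ) :=
    {x | x ∈ P ∧ ∀ f ∈ S, ∑ i, x i * (a f i : ℝ) = (c f : ℝ)} with hQ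
  have hQP : Q ⊆ P := fun x hx => hx.1
  have hQne : Q.Nonempty := ⟨p, hp, hpS⟩
  have hPcomp : IsCompact P := by
    rw [hlat]
    exact (((V : Set (Fin d → ℤ)).toFinite.image _)).isCompact_convexHull (𝕜 := ℝ)
  have hLcont : ∀ f : F, Continuous (fun x : Fin d → ℝ => ∑ i, x i * (a f i : ℝ)) :=
    fun f => continuous_finset_sum _ fun i _ => (continuous_apply i).mul continuous_const
  have hQclosed : IsClosed Q := by
    have : Q = P ∩ ⋂ f ∈ S, {x : Fin d → ℝ | ∑ i, x i * (a f i : ℝ) = (c f : ℝ)} := by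
      ext x
      simp only [hQ, Set.mem_setOf_eq, Set.mem_inter_iff, Set.mem_iInter]
    rw [this]
    exact hPcomp.isClosed.inter (isClosed_biInter fun f _ =>
      isClosed_eq (hLcont f) continuous_const)
  have hQcomp : IsCompact Q := hPcomp.of_isClosed_subset hQclosed hQP
  have hext : IsExtreme ℝ P Q := by
    refine ⟨hQP, ?_⟩
    intro x1 hx1 x2 hx2 x hxQ hseg
    obtain ⟨t, u, ht, hu, htu, hx⟩ := hseg
    have hkey : ∀ f ∈ S,
        ∑ i, x1 i * (a f i : ℝ) = (c f : ℝ) ∧ ∑ i, x2 i * (a f i : ℝ) = (c f : ℝ) := by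
      intro f hf
      have e : ∑ i, x i * (a f i : ℝ) = (c f : ℝ) := hxQ.2 f hf
      have l1 : (c f : ℝ) ≤ ∑ i, x1 i * (a f i : ℝ) := by
        rw [hfacet] at hx1; exact hx1 f
      have l2 : (c f : ℝ) ≤ ∑ i, x2 i * (a f i : ℝ) := by
        rw [hfacet] at hx2; exact hx2 f
      have hlin : ∑ i, x i * (a f i : ℝ)
          = t * ∑ i, x1 i * (a f i : ℝ) + u * ∑ i, x2 i * (a f i : ℝ) := by
        rw [← hx]
        simp [Finset.mul_sum, Finset.sum_add_distrib, add_mul, mul_assoc]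
      rw [hlin] at e
      have hc : t * (c f : ℝ) + u * (c f : ℝ) = (c f : ℝ) := by
        rw [← add_mul, htu, one_mul]
      constructor
      · by_contra h
        have hA : (c f : ℝ) < ∑ i, x1 i * (a f i : ℝ) := lt_of_le_of_ne l1 (Ne.symm h)
        have h1 := mul_lt_mul_of_pos_left hA ht
        have h2 := mul_le_mul_of_nonneg_left l2 hu.le
        linarith
      · by_contra h
        have hA : (c f : ℝ) < ∑ i, x2 i * (a f i : ℝ) := lt_of_le_of_ne l2 (Ne.symm h)
        have h1 := mul_lt_mul_of_pos_left hA hu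
        have h2 := mul_le_mul_of_nonneg_left l1 ht.le
        linarith
    exact ⟨hx1, fun f hf => (hkey f hf).1⟩
  obtain ⟨x, hx⟩ := hQcomp.extremePoints_nonempty hQne
  have hxP : x ∈ P.extremePoints ℝ := hext.extremePoints_subset_extremePoints hx
  rw [hlat] at hxP
  obtain ⟨m, hmV, rfl⟩ := extremePoints_convexHull_subset hxP
  exact ⟨m, hx.1.1, hx.1.2⟩

/-- Every compressed lattice polytope is normal: each lattice point of a
dilate `kP` is a sum of `k` lattice points of `P`. -/
theorem compressed_is_normal
    (d : ℕ) (F : Type) [Fintype F]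
    (a : F → Fin d → ℤ) (c : F → ℤ)
    (P : Set (Fin d → ℝ)) (V : Finset (Fin d → ℤ))
    (hlat : P = convexHull ℝ ((fun m : Fin d → ℤ => fun i => (m i : ℝ)) ''
      (V : Set (Fin d → ℤ))))
    (hfacet : P = {x : Fin d → ℝ | ∀ f : F, (c f : ℝ) ≤ ∑ i, x i * (a f i : ℝ)})
    (hprim : ∀ f : F, Finset.univ.gcd (a f) = 1)
    (hwidth : ∀ f : F, ∀ x ∈ P, ∑ i, x i * (a f i : ℝ) ≤ c f + 1)
    (hwidth' : ∀ f : F, ∃ x ∈ P, ∑ i, x i * (a f i : ℝ) = c f + 1) :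
    ∀ k : ℕ, 1 ≤ k → ∀ s : Fin d → ℤ, (fun i => (s i : ℝ)) ∈ (k : ℝ) • P →
      ∃ y : Fin k → (Fin d → ℤ), (∀ j, (fun i => (y j i : ℝ)) ∈ P) ∧ s = ∑ j, y j := by
  intro k hk
  induction k, hk using Nat.le_induction with
  | base =>
    intro s hs
    rw [Nat.cast_one, one_smul] at hs
    exact ⟨fun _ => s, fun _ => hs, by simp⟩
  | succ k hk ih =>
    intro s hs
    obtain ⟨p, hpP, hps⟩ := hs
    have hkpos : (0:ℝ) < k := by exact_mod_cast hk
    have hK : (0:ℝ) < (k:ℝ) + 1 := by linarith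
    -- coordinates of s in terms of p
    have hsi : ∀ i, (s i : ℝ) = ((k:ℝ) + 1) * p i := by
      intro i
      have := congrFun hps i
      simp only [Pi.smul_apply, smul_eq_mul] at this
      rw [← this]; push_cast; ring
    have hLs : ∀ f, ∑ i, (s i : ℝ) * (a f i : ℝ)
        = ((k:ℝ) + 1) * ∑ i, p i * (a f i : ℝ) := by
      intro f
      simp only [hsi, Finset.mul_sum, mul_assoc]
    -- the set of tight facets
    set S : Set F := {f | ∑ i, s i * a f i = ((k:ℤ) + 1) * c f} with hS
    have hpS : ∀ f ∈ S, ∑ i, p i * (a f i : ℝ) = (c f : ℝ) := by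
      intro f hf
      have h1 : ((∑ i, s i * a f i : ℤ) : ℝ) = ∑ i, (s i : ℝ) * (a f i : ℝ) := by push_cast; ring
      have h2 : ((k:ℝ) + 1) * ∑ i, p i * (a f i : ℝ) = ((k:ℝ) + 1) * (c f : ℝ) := by
        rw [← hLs f, ← h1, hf]; push_cast; ring
      exact mul_left_cancel₀ (ne_of_gt hK) h2
    obtain ⟨m, hmP, hmS⟩ := compressed_key d F a c P V hlat hfacet S p hpP hpS
    -- the integer inequality for s - m
    have hint : ∀ f, (k:ℤ) * c f ≤ ∑ i, (s i - m i) * a f i := by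
      intro f
      have hA : ((k:ℤ) + 1) * c f ≤ ∑ i, s i * a f i := by
        have : (((k:ℤ) + 1) * c f : ℝ) ≤ ((∑ i, s i * a f i : ℤ) : ℝ) := by
          push_cast
          rw [hLs f]
          have : (c f : ℝ) ≤ ∑ i, p i * (a f i : ℝ) := by
            rw [hfacet] at hpP; exact hpP f
          nlinarith
        exact_mod_cast this
      have hB : ∑ i, m i * a f i ≤ c f + 1 := by
        have := hwidth f _ hmP
        have h2 : ((∑ i, m i * a f i : ℤ) : ℝ) ≤ ((c f + 1 : ℤ) : ℝ) := by push_cast; push_cast at this; linarith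
        exact_mod_cast h2
      have hsplit : ∑ i, (s i - m i) * a f i = (∑ i, s i * a f i) - ∑ i, m i * a f i := by
        rw [← Finset.sum_sub_distrib]
        exact Finset.sum_congr rfl fun i _ => by ring
      rw [hsplit]
      by_cases hf : f ∈ S
      · have hBeq : ∑ i, m i * a f i = c f := by
          have := hmS f hf
          have h2 : ((∑ i, m i * a f i : ℤ) : ℝ) = ((c f : ℤ) : ℝ) := by push_cast; push_cast at this; linarith
          exact_mod_cast h2
        rw [hS] at hf
        simp only [Set.mem_setOf_eq] at hf
        rw [hf, hBeq]; ring_nf; linarith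
      · have hAne : ∑ i, s i * a f i ≠ ((k:ℤ) + 1) * c f := hf
        have : ((k:ℤ) + 1) * c f + 1 ≤ ∑ i, s i * a f i := Int.lt_iff_add_one_le.mp (lt_of_le_of_ne hA (Ne.symm hAne))
        linarith
    -- s - m lies in k • P
    have hs' : (fun i => (((s - m) i : ℤ) : ℝ)) ∈ (k : ℝ) • P := by
      rw [Set.mem_smul_set_iff_inv_smul_mem₀ (ne_of_gt hkpos)]
      rw [hfacet]
      intro f
      have hsum : ∑ i, ((k:ℝ)⁻¹ • fun i => (((s - m) i : ℤ) : ℝ)) i * (a f i : ℝ)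
          = (k:ℝ)⁻¹ * ∑ i, ((s i : ℝ) - (m i : ℝ)) * (a f i : ℝ) := by
        simp [Finset.mul_sum, mul_assoc]
      have h1 : ((k:ℝ)) * (c f : ℝ) ≤ ∑ i, ((s i : ℝ) - (m i : ℝ)) * (a f i : ℝ) := by
        have := hint f
        have h2 : (((k:ℤ) * c f : ℤ) : ℝ) ≤ ((∑ i, (s i - m i) * a f i : ℤ) : ℝ) := by exact_mod_cast this
        push_cast at h2
        convert h2 using 2 <;> push_cast <;> ring_nf
      show (c f : ℝ) ≤ _
      rw [hsum]
      have h3 : (c f : ℝ) = (k:ℝ)⁻¹ * ((k:ℝ) * (c f : ℝ)) := by field_simp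
      rw [h3]
      exact mul_le_mul_of_nonneg_left h1 (inv_nonneg.2 hkpos.le)
    obtain ⟨y', hy', hsum'⟩ := ih (s - m) hs'
    refine ⟨Fin.cons m y', ?_, ?_⟩
    · intro j
      refine Fin.cases ?_ ?_ j
      · simpa using hmP
      · intro j'; simpa using hy' j'
    · rw [Fin.sum_cons, ← hsum']
      abel
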